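/- Let (X,𝓑,σ,R) be as usual with R1 = 1 and pull-out property, and let λ be a probability measure with λR ≪ λ and W = d(λR)/dλ. Then for every n ≥ 0: ∫ (W∘σⁿ)·(W∘σⁿ⁻¹)⋯(W∘σ)·W dλ = 1, and ∫ √((W∘σⁿ)⋯(W∘σ)·W) dλ ≤ 1. -/

import Mathlib

open MeasureTheory Filter

/-- with `λR ≪ λ`, `W = d(λR)/dλ`, `λ` a probability measure, for all
`n ≥ 0`: `∫ (W∘σⁿ)⋯(W∘σ)·W dλ = 1` and `∫ √((W∘σⁿ)⋯(W∘σ)·W) dλ ≤ 1`. -/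
theorem stmt16 {X : Type*} [MeasurableSpace X]
    (σ : X → X) (hσ : Measurable σ) (hσonto : Function.Surjective σ)
    (R : (X → ℝ) → (X → ℝ))
    (hRmeas : ∀ f, Measurable f → Measurable (R f))
    (hRpos : ∀ f, (∀ x, 0 ≤ f x) → ∀ x, 0 ≤ R f x)
    (hRadd : ∀ f g, R (f + g) = R f + R g)
    (hRsmul : ∀ (c : ℝ) (f), R (fun x => c * f x) = fun x => c * R f x)
    (hRone : R (fun _ => 1) = fun _ => 1)
    (hpull : ∀ f g, Measurable f → Measurable g →
      R (fun x => f (σ x) * g x) = fun x => f x * R g x)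
    (lam : Measure X) [IsProbabilityMeasure lam]
    (W : X → ℝ) (hWmeas : Measurable W) (hW0 : ∀ x, 0 ≤ W x)
    (hW : ∀ f : X → ℝ, Measurable f → (∃ C, ∀ x, |f x| ≤ C) →
      ∫ x, R f x ∂lam = ∫ x, f x * W x ∂lam) :
    ∀ n : ℕ,
      (∫ x, ∏ k ∈ Finset.range (n + 1), W (σ^[k] x) ∂lam = 1) ∧
      (∫ x, Real.sqrt (∏ k ∈ Finset.range (n + 1), W (σ^[k] x)) ∂lam ≤ 1) := by
  -- notation
  set P : ℕ → X → ℝ := fun n x => ∏ k ∈ Finset.range (n + 1), W (σ^[k] x) with hP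
  have hPmeas : ∀ n, Measurable (P n) := by
    intro n
    exact Finset.measurable_prod _ (fun k _ => hWmeas.comp (hσ.iterate k))
  have hPpos : ∀ n x, 0 ≤ P n x := by
    intro n x
    exact Finset.prod_nonneg (fun k _ => hW0 _)
  have hPsucc : ∀ n x, P (n + 1) x = P n (σ x) * W x := by
    intro n x
    simp only [hP]
    rw [Finset.prod_range_succ' (fun k => W (σ^[k] x)) (n + 1)]
    simp [Function.iterate_succ_apply]
  -- the key transfer equality for bounded measurable f
  have key : ∀ f : X → ℝ, Measurable f → (∃ C, ∀ x, |f x| ≤ C) →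
      ∫ x, f x ∂lam = ∫ x, f (σ x) * W x ∂lam := by
    intro f hf ⟨C, hC⟩
    have h1 : R (fun x => f (σ x) * (fun _ : X => (1:ℝ)) x) = fun x => f x * R (fun _ => 1) x :=
      hpull f (fun _ => 1) hf measurable_const
    rw [hRone] at h1
    simp only [mul_one] at h1
    have h2 := hW (fun x => f (σ x) * 1) (by simp only [mul_one]; exact hf.comp hσ) ⟨C, fun x => by simpa using hC (σ x)⟩
    simp only [mul_one] at h1 h2
    calc ∫ x, f x ∂lam = ∫ x, R (fun x => f (σ x)) x ∂lam := by rw [h1]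
      _ = ∫ x, f (σ x) * W x ∂lam := h2
  -- W is integrable with integral 1
  have hWint1 : ∫ x, W x ∂lam = 1 := by
    have h := hW (fun _ => 1) measurable_const ⟨1, fun x => by simp⟩
    simp only [hRone, one_mul] at h
    simp at h
    linarith [h]
  have hWint : Integrable W lam := by
    by_contra hc
    rw [integral_undef hc] at hWint1
    norm_num at hWint1
  -- main induction
  have main : ∀ n, Integrable (P n) lam ∧ ∫ x, P n x ∂lam = 1 := by
    intro n
    induction n with
    | zero =>
      constructor
      · simpa [hP] using hWint
      · simpa [hP] using hWint1
    | succ n ih =>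
      obtain ⟨hint, hone⟩ := ih
      -- truncations
      set f : ℕ → X → ℝ := fun m x => min (P n x) m with hf
      have hfmeas : ∀ m, Measurable (f m) := fun m => (hPmeas n).min measurable_const
      have hf0 : ∀ m x, 0 ≤ f m x := fun m x => le_min (hPpos n x) (by positivity)
      have hfleP : ∀ m x, f m x ≤ P n x := fun m x => min_le_left _ _
      have hfbd : ∀ m x, |f m x| ≤ m := by
        intro m x
        rw [abs_of_nonneg (hf0 m x)]
        exact min_le_right _ _
      have hfmono : ∀ x, Monotone (fun m => f m x) := by
        intro x m₁ m₂ h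
        exact min_le_min le_rfl (by exact_mod_cast Nat.cast_le.2 h)
      have hftend : ∀ x, Tendsto (fun m => f m x) atTop (nhds (P n x)) := by
        intro x
        apply tendsto_atTop_of_eventually_const (i₀ := ⌈P n x⌉₊)
        intro m hm
        exact min_eq_left (le_trans (Nat.le_ceil _) (by exact_mod_cast hm))
      have hfint : ∀ m, Integrable (f m) lam := by
        intro m
        exact hint.mono' (hfmeas m).aestronglyMeasurable
          (Filter.Eventually.of_forall (fun x => by
            rw [Real.norm_eq_abs, abs_of_nonneg (hf0 m x)]; exact hfleP m x))
      -- transferred equations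
      have heq : ∀ m : ℕ, ∫ x, f m x ∂lam = ∫ x, f m (σ x) * W x ∂lam := by
        intro m
        exact key (f m) (hfmeas m) ⟨m, hfbd m⟩
      set g : ℕ → X → ℝ := fun m x => f m (σ x) * W x with hg
      have hgmeas : ∀ m, Measurable (g m) := fun m => ((hfmeas m).comp hσ).mul hWmeas
      have hg0 : ∀ m x, 0 ≤ g m x := fun m x => mul_nonneg (hf0 m _) (hW0 x)
      have hgint : ∀ m, Integrable (g m) lam := by
        intro m
        apply (hWint.const_mul (m : ℝ)).mono' (hgmeas m).aestronglyMeasurable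
        apply Filter.Eventually.of_forall
        intro x
        rw [Real.norm_eq_abs, abs_of_nonneg (hg0 m x)]
        exact mul_le_mul_of_nonneg_right (le_trans (le_abs_self _) (hfbd m (σ x))) (hW0 x)
      -- limit of LHS: ∫ f m → ∫ P n = 1
      have hLtend : Tendsto (fun m : ℕ => ∫ x, f m x ∂lam) atTop (nhds 1) := by
        rw [← hone]
        apply tendsto_integral_of_dominated_convergence (P n)
          (fun m => (hfmeas m).aestronglyMeasurable) hint
        · intro m
          apply Filter.Eventually.of_forall
          intro x
          rw [Real.norm_eq_abs, abs_of_nonneg (hf0 m x)]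
          exact hfleP m x
        · exact Filter.Eventually.of_forall hftend
      have hLmono : Monotone (fun m : ℕ => ∫ x, f m x ∂lam) := by
        intro m₁ m₂ h
        exact integral_mono (hfint m₁) (hfint m₂) (fun x => hfmono x h)
      -- lintegral of P (n+1)
      have hptw : ∀ x, (⨆ m : ℕ, ENNReal.ofReal (g m x)) = ENNReal.ofReal (P (n+1) x) := by
        intro x
        have hm : Monotone (fun m : ℕ => ENNReal.ofReal (g m x)) := by
          intro m₁ m₂ h
          exact ENNReal.ofReal_le_ofReal (mul_le_mul_of_nonneg_right (hfmono (σ x) h) (hW0 x))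
        have ht : Tendsto (fun m : ℕ => ENNReal.ofReal (g m x)) atTop
            (nhds (ENNReal.ofReal (P (n+1) x))) := by
          rw [hPsucc n x]
          exact (ENNReal.continuous_ofReal.tendsto _).comp ((hftend (σ x)).mul_const (W x))
        exact tendsto_nhds_unique (tendsto_atTop_iSup hm) ht
      have hlin : ∫⁻ x, ENNReal.ofReal (P (n+1) x) ∂lam
          = ⨆ m : ℕ, ∫⁻ x, ENNReal.ofReal (g m x) ∂lam := by
        rw [← lintegral_iSup (fun m => (hgmeas m).ennreal_ofReal)
          (fun m₁ m₂ h => fun x => ENNReal.ofReal_le_ofReal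
            (mul_le_mul_of_nonneg_right (hfmono (σ x) h) (hW0 x)))]
        exact lintegral_congr (fun x => (hptw x).symm)
      have hlin2 : ∀ m : ℕ, ∫⁻ x, ENNReal.ofReal (g m x) ∂lam
          = ENNReal.ofReal (∫ x, f m x ∂lam) := by
        intro m
        rw [heq m]
        exact (ofReal_integral_eq_lintegral_ofReal (hgint m)
          (Filter.Eventually.of_forall (hg0 m))).symm
      have hsup : (⨆ m : ℕ, ENNReal.ofReal (∫ x, f m x ∂lam)) = 1 := by
        have hm : Monotone (fun m : ℕ => ENNReal.ofReal (∫ x, f m x ∂lam)) :=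
          fun m₁ m₂ h => ENNReal.ofReal_le_ofReal (hLmono h)
        have ht : Tendsto (fun m : ℕ => ENNReal.ofReal (∫ x, f m x ∂lam)) atTop
            (nhds (ENNReal.ofReal 1)) :=
          (ENNReal.continuous_ofReal.tendsto _).comp hLtend
        have := tendsto_nhds_unique (tendsto_atTop_iSup hm) ht
        simpa using this
      have hlinP : ∫⁻ x, ENNReal.ofReal (P (n+1) x) ∂lam = 1 := by
        rw [hlin]
        simp only [hlin2]
        exact hsup
      constructor
      · refine ⟨(hPmeas (n+1)).aestronglyMeasurable, ?_⟩
        rw [hasFiniteIntegral_iff_ofReal (Filter.Eventually.of_forall (hPpos (n+1)))]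
        rw [hlinP]
        exact ENNReal.one_lt_top
      · rw [integral_eq_lintegral_of_nonneg_ae (Filter.Eventually.of_forall (hPpos (n+1)))
          (hPmeas (n+1)).aestronglyMeasurable, hlinP]
        simp
  -- conclude
  intro n
  obtain ⟨hint, hone⟩ := main n
  refine ⟨hone, ?_⟩
  -- √(P n x) ≤ (1 + P n x)/2
  have hsq : ∀ x, Real.sqrt (P n x) ≤ (1 + P n x) / 2 := by
    intro x
    have h1 : Real.sqrt (P n x) ^ 2 = P n x := Real.sq_sqrt (hPpos n x)
    nlinarith [sq_nonneg (Real.sqrt (P n x) - 1), h1]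
  have hbint : Integrable (fun x => (1 + P n x) / 2) lam := by
    exact ((integrable_const (1:ℝ)).add hint).div_const 2
  have hsqint : Integrable (fun x => Real.sqrt (P n x)) lam := by
    apply hbint.mono' ((hPmeas n).sqrt).aestronglyMeasurable
    apply Filter.Eventually.of_forall
    intro x
    rw [Real.norm_eq_abs, abs_of_nonneg (Real.sqrt_nonneg _)]
    exact hsq x
  calc ∫ x, Real.sqrt (P n x) ∂lam ≤ ∫ x, (1 + P n x) / 2 ∂lam :=
        integral_mono hsqint hbint hsq
    _ = 1 := by
        rw [integral_div, integral_add (integrable_const 1) hint, integral_const, hone]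
        simp
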